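/- arXiv:2009.09124 — 3 statements merged into one kernel-verified Lean document; each statement's English description precedes it below -/
import Mathlib

section
/- Let (R,σ) be a commutative ring with involution, let I ⊆ Jac(R) be an ideal contained in the Jacobson radical with σ(I) = I, and let (E,b) be a Hermitian module over R. Suppose E/IE decomposes orthogonally as F̄ ⊥ Ḡ over R/I with F̄ free and non-degenerate. Then there is an orthogonal decomposition E = F ⊥ G over R with F free and non-degenerate, such that F/IF = F̄ and G/IG = Ḡ. -/
/-!
Statement 3: Let `(R, σ)` be a commutative ring with involution, `I ⊆ Jac(R)` an ideal
contained in the Jacobson radical with `σ(I) = I`, and `(E, b)` a Hermitian module over `R`.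
Suppose `E/IE` decomposes orthogonally as `F̄ ⊥ Ḡ` over `R/I` with `F̄` free and
non-degenerate (invertible Gram matrix of a basis).  Then there is an orthogonal
decomposition `E = F ⊥ G` over `R` with `F` free and non-degenerate, `F/IF = F̄` and
`G/IG = Ḡ`.

The data modulo `I` is encoded by representatives: `F̄` is the span of the images of
`x : Fin n → E` (with Gram determinant a unit mod `I`), `Ḡ` is the image of a submodule
`G`, orthogonality holds modulo `I`, and together they span `E` modulo `I • E`.  The
conclusion produces lifts `y i ≡ x i (mod I•E)` spanning a free non-degenerate orthogonal
direct summand with complement `G'` reducing to `Ḡ` modulo `I`.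
-/

theorem hermitian_lifting_along_jacobson_ideal
    {R : Type*} [CommRing R] (σ : R →+* R) (hσ : ∀ r, σ (σ r) = r)
    (I : Ideal R) (hIJ : I ≤ (⊥ : Ideal R).jacobson) (hIσ : ∀ r ∈ I, σ r ∈ I)
    {E : Type*} [AddCommGroup E] [Module R E]
    [Module.Finite R E] [Module.Projective R E]
    (b : E → E → R)
    (hb_addl : ∀ x x' y : E, b (x + x') y = b x y + b x' y)
    (hb_addr : ∀ x y y' : E, b x (y + y') = b x y + b x y')
    (hb_sesql : ∀ (r : R) (x y : E), b (r • x) y = σ r * b x y)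
    (hb_sesqr : ∀ (r : R) (x y : E), b x (r • y) = b x y * r)
    (hb_herm : ∀ x y : E, b x y = σ (b y x))
    (n : ℕ) (x : Fin n → E) (G : Submodule R E)
    -- `E/IE = F̄ ⊥ Ḡ` with `F̄` the (free) span of the classes of the `x i`
    (horth : ∀ i, ∀ g ∈ G, b (x i) g ∈ I)
    (hspan : Submodule.span R (Set.range x) ⊔ G ⊔ (I • (⊤ : Submodule R E)) = ⊤)
    (hgram : IsUnit (Ideal.Quotient.mk I
      (Matrix.det (Matrix.of fun i j => b (x i) (x j))))) :
    ∃ (y : Fin n → E) (G' : Submodule R E),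
      -- `F/IF = F̄` : the lifts reduce to the given classes mod `I•E`
      (∀ i, y i - x i ∈ (I • (⊤ : Submodule R E))) ∧
      -- `F` is free ...
      LinearIndependent R y ∧
      -- ... and non-degenerate
      IsUnit (Matrix.det (Matrix.of fun i j => b (y i) (y j))) ∧
      -- `E = F ⊥ G'` is an orthogonal decomposition
      (∀ i, ∀ g ∈ G', b (y i) g = 0) ∧
      IsCompl (Submodule.span R (Set.range y)) G' ∧
      -- `G'/IG' = Ḡ`
      G' ⊔ (I • (⊤ : Submodule R E)) = G ⊔ (I • (⊤ : Submodule R E)) := by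
  classical
  set A : Matrix (Fin n) (Fin n) R := Matrix.of (fun i j => b (x i) (x j)) with hA
  -- det A is a unit in R, since it is a unit mod I ⊆ Jac(R)
  have hdet : IsUnit A.det := by
    obtain ⟨v, hv⟩ := hgram.exists_right_inv
    obtain ⟨c, rfl⟩ := Ideal.Quotient.mk_surjective v
    have hmem : A.det * c - 1 ∈ I := by
      rw [← Ideal.Quotient.eq_zero_iff_mem]
      rw [map_sub, map_mul, map_one]
      rw [hv]; ring
    have hj : A.det * c - 1 ∈ (⊥ : Ideal R).jacobson := hIJ hmem
    have hu := (Ideal.mem_jacobson_bot.mp hj) 1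
    have heq : (A.det * c - 1) * 1 + 1 = A.det * c := by ring
    rw [heq] at hu
    exact isUnit_of_mul_isUnit_left hu
  set B : Matrix (Fin n) (Fin n) R := A⁻¹ with hB
  have hAB : A * B = 1 := A.mul_nonsing_inv hdet
  have hBA : B * A = 1 := A.nonsing_inv_mul hdet
  -- the linear forms b (x j, ·)
  let L : Fin n → E →ₗ[R] R := fun j =>
    { toFun := b (x j)
      map_add' := hb_addr (x j)
      map_smul' := fun r v => by
        simp only [RingHom.id_apply, smul_eq_mul]
        rw [hb_sesqr]; ring }
  have hLx : ∀ j i, L j (x i) = A j i := fun j i => rfl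
  have Lsum : ∀ (j : Fin n) (c : Fin n → R), L j (∑ i, c i • x i) = A.mulVec c j := by
    intro j c
    rw [map_sum]
    simp only [map_smul, smul_eq_mul, hLx, Matrix.mulVec, dotProduct]
    exact Finset.sum_congr rfl fun i _ => mul_comm _ _
  have hLI : ∀ (j : Fin n) (m : E), m ∈ I • (⊤ : Submodule R E) → L j m ∈ I := by
    intro j m hm
    refine Submodule.smul_induction_on hm ?_ ?_
    · intro r hr e _
      rw [map_smul, smul_eq_mul]
      exact I.mul_mem_right _ hr
    · intro a c ha hc
      rw [map_add]; exact I.add_mem ha hc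
  -- recover coefficients: if v j = L j f for f = ∑ d i • x i, then d = B.mulVec v
  have hrecover : ∀ (c : Fin n → R), B.mulVec (A.mulVec c) = c := by
    intro c
    rw [Matrix.mulVec_mulVec, hBA, Matrix.one_mulVec]
  have hABv : ∀ (v : Fin n → R), A.mulVec (B.mulVec v) = v := by
    intro v
    rw [Matrix.mulVec_mulVec, hAB, Matrix.one_mulVec]
  -- linear independence
  have hli : LinearIndependent R x := by
    rw [Fintype.linearIndependent_iff]
    intro c hc i
    have h0 : A.mulVec c = 0 := by
      funext j
      rw [← Lsum j c, hc, map_zero]; rfl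
    have : c = 0 := by
      have := hrecover c
      rw [h0, Matrix.mulVec_zero] at this
      exact this.symm
    exact congrFun this i
  -- the orthogonal complement
  set G' : Submodule R E := ⨅ j, LinearMap.ker (L j) with hG'
  have hmemG' : ∀ e : E, e ∈ G' ↔ ∀ j, L j e = 0 := by
    intro e
    simp [hG', Submodule.mem_iInf, LinearMap.mem_ker]
  -- projection decomposition
  have hkey : ∀ e : E, e - (∑ i, (B.mulVec fun j => L j e) i • x i) ∈ G' := by
    intro e
    rw [hmemG']
    intro j
    rw [map_sub, Lsum, hABv]
    exact sub_self _
  have hmulVecI : ∀ (v : Fin n → R), (∀ j, v j ∈ I) → ∀ i, B.mulVec v i ∈ I := by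
    intro v hv i
    have : B.mulVec v i = ∑ j, B i j * v j := rfl
    rw [this]
    exact Ideal.sum_mem I fun j _ => I.mul_mem_left _ (hv j)
  have hsumI : ∀ (c : Fin n → R), (∀ i, c i ∈ I) → (∑ i, c i • x i) ∈ I • (⊤ : Submodule R E) := by
    intro c hc
    exact Submodule.sum_mem _ fun i _ => Submodule.smul_mem_smul (hc i) trivial
  refine ⟨x, G', ?_, hli, hdet, ?_, ?_, ?_⟩
  · intro i; simp
  · intro i g hg
    exact (hmemG' g).mp hg i
  · constructor
    · rw [Submodule.disjoint_def]
      intro e he hg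
      obtain ⟨c, rfl⟩ := (Submodule.mem_span_range_iff_exists_fun R).mp he
      have h0 : A.mulVec c = 0 := by
        funext j
        rw [← Lsum j c, (hmemG' _).mp hg j]; rfl
      have hc0 : c = 0 := by
        have := hrecover c
        rw [h0, Matrix.mulVec_zero] at this
        exact this.symm
      simp [hc0]
    · rw [codisjoint_iff, eq_top_iff]
      intro e _
      refine Submodule.mem_sup.mpr ⟨∑ i, (B.mulVec fun j => L j e) i • x i, ?_,
        e - ∑ i, (B.mulVec fun j => L j e) i • x i, hkey e, by abel⟩
      exact Submodule.sum_mem _ fun i _ =>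
        Submodule.smul_mem _ _ (Submodule.subset_span (Set.mem_range_self i))
  · apply le_antisymm
    · refine sup_le ?_ le_sup_right
      -- G' ≤ G ⊔ I•⊤
      intro g' hg'
      have hg'top : g' ∈ Submodule.span R (Set.range x) ⊔ G ⊔ (I • (⊤ : Submodule R E)) := by
        rw [hspan]; trivial
      obtain ⟨p, hp, m, hm, hpm⟩ := Submodule.mem_sup.mp hg'top
      obtain ⟨f, hf, g, hg, hfg⟩ := Submodule.mem_sup.mp hp
      obtain ⟨d, rfl⟩ := (Submodule.mem_span_range_iff_exists_fun R).mp hf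
      -- the coefficients of f lie in I
      have hvI : ∀ j, A.mulVec d j ∈ I := by
        intro j
        have hLg' : L j g' = 0 := (hmemG' g').mp hg' j
        have : A.mulVec d j = L j g' - L j g - L j m := by
          rw [← Lsum j d]
          have : g' = (∑ i, d i • x i) + g + m := by rw [hfg, hpm]
          rw [this, map_add, map_add]; ring
        rw [this, hLg']
        have := I.sub_mem (I.sub_mem I.zero_mem (horth j g hg)) (hLI j m hm)
        exact this
      have hdI : ∀ i, d i ∈ I := by
        intro i
        have := hmulVecI (A.mulVec d) hvI i
        rwa [hrecover d] at this
      have hfI : (∑ i, d i • x i) ∈ I • (⊤ : Submodule R E) := hsumI d hdI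
      refine Submodule.mem_sup.mpr ⟨g, hg, (∑ i, d i • x i) + m, ?_, ?_⟩
      · exact Submodule.add_mem _ hfI hm
      · rw [← hpm, ← hfg]; abel
    · refine sup_le ?_ le_sup_right
      -- G ≤ G' ⊔ I•⊤
      intro g hg
      set v : Fin n → R := fun j => L j g with hv
      have hvI : ∀ j, v j ∈ I := fun j => horth j g hg
      set c : Fin n → R := B.mulVec v with hc
      have hcI : ∀ i, c i ∈ I := hmulVecI v hvI
      have hfI : (∑ i, c i • x i) ∈ I • (⊤ : Submodule R E) := hsumI c hcI
      have hgf : g - (∑ i, c i • x i) ∈ G' := hkey g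
      refine Submodule.mem_sup.mpr ⟨g - ∑ i, c i • x i, hgf, ∑ i, c i • x i, hfI, by abel⟩
end

section
/- Let (R,m) be a strictly henselian local ring with involution such that 1/2 ∈ R and the induced involution on the residue field R/m is trivial. Then every element x ∈ R× with σ(x) = x admits c ∈ R× with σ(c)·x·c = 1; consequently every rank-one non-degenerate Hermitian form over R is isometric to ⟨1⟩, and non-degenerate Hermitian modules over R are determined up to isometry by their rank. -/
/-!
Statement 6: Let `(R, m)` be a strictly henselian local ring (henselian local with
separably closed residue field) with involution `σ` such that `1/2 ∈ R` and the induced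
involution on the residue field `R/m` is trivial.  Then:
* every `x ∈ Rˣ` with `σ x = x` admits `c ∈ Rˣ` with `σ(c) * x * c = 1` (so every rank-one
  non-degenerate Hermitian form over `R` is isometric to `⟨1⟩`), and
* non-degenerate Hermitian modules over `R` are determined up to isometry by their rank:
  any two non-degenerate Hermitian matrices of the same size are congruent via a matrix
  `C` with `σ(Cᵀ) · A · C = B` (non-degenerate Hermitian modules over the local ring `R`
  are free, so are given by invertible Hermitian Gram matrices, and an isometry is
  precisely such a congruence).
-/



open Matrix IsLocalRing

section MatAux
variable {R : Type*} [CommRing R] (σ : R →+* R)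

/-- herm preserved under congruence. -/
lemma herm_congr (hinv : ∀ r, σ (σ r) = r) {ι : Type*} [Fintype ι]
    (A D : Matrix ι ι R) (hA : ∀ i j, σ (A j i) = A i j) :
    ∀ i j, σ ((Dᵀ.map σ * A * D) j i) = (Dᵀ.map σ * A * D) i j := by
  have hA' : Aᵀ.map σ = A := by ext i j; simpa using hA i j
  have key : ((Dᵀ.map σ * A * D)ᵀ).map σ = Dᵀ.map σ * A * D := by
    have e1 : (Dᵀ.map σ * A * D)ᵀ = Dᵀ * Aᵀ * (D.map σ) := by
      rw [Matrix.transpose_mul, Matrix.transpose_mul]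
      rw [Matrix.transpose_map, Matrix.transpose_transpose]
      rw [Matrix.mul_assoc]
    have hmm : (D.map σ).map σ = D := by
      rw [Matrix.map_map]
      have : (σ ∘ σ : R → R) = id := funext hinv
      rw [this, Matrix.map_id]
    rw [e1, Matrix.map_mul, Matrix.map_mul, hmm]
    congr 1
    rw [Matrix.transpose_map]
    rw [show (Aᵀ.map σ : Matrix ι ι R) = A from hA']
  intro i j
  have h := congrFun (congrFun key i) j
  simp only [Matrix.map_apply, Matrix.transpose_apply] at h
  exact h

lemma det_congr_unit {ι : Type*} [Fintype ι] [DecidableEq ι]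
    (A D : Matrix ι ι R) (hA : IsUnit A.det) (hD : IsUnit D.det) :
    IsUnit (Dᵀ.map σ * A * D).det := by
  have h1 : (Dᵀ.map σ).det = σ D.det := by
    rw [Matrix.transpose_map, Matrix.det_transpose, ← RingHom.mapMatrix_apply, ← RingHom.map_det]
  rw [Matrix.det_mul, Matrix.det_mul, h1]
  exact ((hD.map σ).mul hA).mul hD

/-- congruence transfer. -/
lemma coneone_congr {ι : Type*} [Fintype ι] [DecidableEq ι]
    (A D : Matrix ι ι R) (hD : IsUnit D.det)
    (h : ∃ C : Matrix ι ι R, IsUnit C.det ∧ Cᵀ.map σ * (Dᵀ.map σ * A * D) * C = 1) :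
    ∃ C : Matrix ι ι R, IsUnit C.det ∧ Cᵀ.map σ * A * C = 1 := by
  obtain ⟨C, hC, hC1⟩ := h
  refine ⟨D * C, by rw [Matrix.det_mul]; exact hD.mul hC, ?_⟩
  have : (D * C)ᵀ.map σ = Cᵀ.map σ * Dᵀ.map σ := by
    rw [Matrix.transpose_mul, Matrix.map_mul]
  rw [this, ← hC1]
  noncomm_ring

/-- submatrix transfer. -/
lemma coneone_submatrix {ι κ : Type*} [Fintype ι] [DecidableEq ι] [Fintype κ] [DecidableEq κ]
    (e : κ ≃ ι) (A : Matrix ι ι R)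
    (h : ∃ C : Matrix κ κ R, IsUnit C.det ∧ Cᵀ.map σ * (A.submatrix e e) * C = 1) :
    ∃ C : Matrix ι ι R, IsUnit C.det ∧ Cᵀ.map σ * A * C = 1 := by
  obtain ⟨C, hC, hC1⟩ := h
  refine ⟨C.submatrix e.symm e.symm, by rwa [Matrix.det_submatrix_equiv_self], ?_⟩
  have h1 : (C.submatrix e.symm e.symm)ᵀ.map σ = (Cᵀ.map σ).submatrix e.symm e.symm := by
    rw [Matrix.transpose_submatrix, Matrix.submatrix_map]
  have h2 : A = (A.submatrix e e).submatrix e.symm e.symm := by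
    rw [Matrix.submatrix_submatrix]; simp
  rw [h1, h2, Matrix.submatrix_mul_equiv, Matrix.submatrix_mul_equiv]
  rw [hC1, Matrix.submatrix_one_equiv]

end MatAux

section Pivot
variable {R : Type*} [CommRing R] [IsLocalRing R] (σ : R →+* R)

lemma unit_add_mem_isUnit' {u a : R} (hu : IsUnit u) (ha : a ∈ maximalIdeal R) :
    IsUnit (u + a) := by
  by_contra h
  have h1 : u + a ∈ maximalIdeal R := h
  have : u ∈ maximalIdeal R := by simpa using sub_mem h1 ha
  exact this hu

lemma exists_unit_entry {n : ℕ} (A : Matrix (Fin (n+1)) (Fin (n+1)) R)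
    (hA : IsUnit A.det) : ∃ p q, IsUnit (A p q) := by
  by_contra h
  push_neg at h
  have hm : ∀ p q, A p q ∈ maximalIdeal R := fun p q => h p q
  have : A.det ∈ maximalIdeal R := by
    rw [Matrix.det_apply']
    refine Ideal.sum_mem _ fun π _ => ?_
    have hp : (∏ i, A (π i) i) ∈ maximalIdeal R := by
      rw [← Finset.mul_prod_erase Finset.univ _ (Finset.mem_univ (0 : Fin (n+1)))]
      exact Ideal.mul_mem_right _ _ (hm _ _)
    exact Ideal.mul_mem_left _ _ hp
  exact this hA

lemma exists_diag_unit (hinv : ∀ r, σ (σ r) = r) (h2 : IsUnit (2 : R))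
    (hres : ∀ r : R, σ r - r ∈ maximalIdeal R) {n : ℕ}
    (A : Matrix (Fin (n+1)) (Fin (n+1)) R)
    (hA : ∀ i j, σ (A j i) = A i j) (hdet : IsUnit A.det) :
    ∃ D : Matrix (Fin (n+1)) (Fin (n+1)) R, IsUnit D.det ∧
      ∃ r, IsUnit ((Dᵀ.map σ * A * D) r r) := by
  by_cases hd : ∃ r, IsUnit (A r r)
  · obtain ⟨r, hr⟩ := hd
    refine ⟨1, by simp, r, ?_⟩
    have : (1 : Matrix (Fin (n+1)) (Fin (n+1)) R)ᵀ.map σ = 1 := by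
      rw [Matrix.transpose_one]
      exact Matrix.map_one σ σ.map_zero σ.map_one
    rw [this, one_mul, mul_one]
    exact hr
  · push_neg at hd
    obtain ⟨p, q, hpq⟩ := exists_unit_entry A hdet
    have hne : p ≠ q := by
      rintro rfl
      exact hd p hpq
    have hqp : q ≠ p := hne.symm
    set D := Matrix.transvection q p (1 : R) with hDdef
    have hDσ : Dᵀ.map σ = Matrix.transvection p q (1 : R) := by
      ext a b
      simp only [Matrix.map_apply, Matrix.transpose_apply, hDdef, Matrix.transvection,
        Matrix.add_apply, Matrix.single, Matrix.of_apply,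
        Matrix.smul_apply, smul_eq_mul, one_mul]
      rw [map_add]
      congr 1
      · rw [Matrix.one_apply, Matrix.one_apply, apply_ite σ]
        simp [σ.map_one, σ.map_zero, eq_comm]
      · rw [apply_ite σ]
        simp [σ.map_one, σ.map_zero, and_comm]
    refine ⟨D, by rw [hDdef, Matrix.det_transvection_of_ne q p hqp]; exact isUnit_one, p, ?_⟩
    rw [hDσ]
    have hmul : (Matrix.transvection p q (1:R) * (A * D)) p p
        = (A * D) p p + (A * D) q p := by
      rw [Matrix.transvection_mul_apply_same]
      ring
    have h1 : (A * D) p p = A p p + A p q := by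
      rw [hDdef, Matrix.mul_transvection_apply_same]
      ring
    have h2' : (A * D) q p = A q p + A q q := by
      rw [hDdef, Matrix.mul_transvection_apply_same]
      ring
    rw [Matrix.mul_assoc, hmul, h1, h2']
    have hform : A p p + A p q + (A q p + A q q)
        = 2 * A p q + ((σ (A p q) - A p q) + (A p p + A q q)) := by
      rw [← hA q p]; ring
    rw [hform]
    refine unit_add_mem_isUnit' (h2.mul hpq) (add_mem (hres _) (add_mem ?_ ?_))
    · exact hd p
    · exact hd q

end Pivot

section Block
variable {R : Type*} [CommRing R] (σ : R →+* R)

/-- The equivalence `Fin 1 ⊕ Fin n ≃ Fin (n+1)`. -/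
def sumEquiv (n : ℕ) : (Fin 1 ⊕ Fin n) ≃ Fin (n+1) where
  toFun := Sum.elim (fun _ => 0) Fin.succ
  invFun := fun k => Fin.cases (Sum.inl 0) Sum.inr k
  left_inv := by rintro (⟨i, hi⟩ | k)
                 · interval_cases i <;> simp
                 · simp
  right_inv := by
    intro k
    cases k using Fin.cases <;> simp

lemma block_step (hinv : ∀ r, σ (σ r) = r) {n : ℕ}
    (A : Matrix (Fin (n+1)) (Fin (n+1)) R)
    (hA : ∀ i j, σ (A j i) = A i j) (hdet : IsUnit A.det) (h00 : A 0 0 = 1)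
    (IH : ∀ T : Matrix (Fin n) (Fin n) R, (∀ i j, σ (T j i) = T i j) → IsUnit T.det →
      ∃ C : Matrix (Fin n) (Fin n) R, IsUnit C.det ∧ Cᵀ.map σ * T * C = 1) :
    ∃ C : Matrix (Fin (n+1)) (Fin (n+1)) R, IsUnit C.det ∧ Cᵀ.map σ * A * C = 1 := by
  apply coneone_submatrix σ (sumEquiv n) A
  set M : Matrix (Fin 1 ⊕ Fin n) (Fin 1 ⊕ Fin n) R := A.submatrix (sumEquiv n) (sumEquiv n)
    with hMdef
  have hM : ∀ i j, σ (M j i) = M i j := fun i j => hA _ _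
  have hMdet : IsUnit M.det := by rwa [hMdef, Matrix.det_submatrix_equiv_self]
  have hM00 : M (Sum.inl 0) (Sum.inl 0) = 1 := h00
  set Q := M.toBlocks₁₂ with hQ
  set T := M.toBlocks₂₂ with hT
  have hM11 : M.toBlocks₁₁ = 1 := by
    ext i j
    rw [Subsingleton.elim i 0, Subsingleton.elim j 0]
    simp [Matrix.toBlocks₁₁, hM00, Matrix.one_apply]
  have hM21 : M.toBlocks₂₁ = Qᵀ.map σ := by
    ext i j
    simp only [Matrix.toBlocks₂₁, Matrix.of_apply, Matrix.map_apply, Matrix.transpose_apply, hQ,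
      Matrix.toBlocks₁₂]
    exact (hM (Sum.inr i) (Sum.inl j)).symm
  have hMeq : M = Matrix.fromBlocks 1 Q (Qᵀ.map σ) T := by
    conv_lhs => rw [← Matrix.fromBlocks_toBlocks M]
    rw [hM11, hM21]
  set D : Matrix (Fin 1 ⊕ Fin n) (Fin 1 ⊕ Fin n) R := Matrix.fromBlocks 1 (-Q) 0 1 with hD
  have hDdet : IsUnit D.det := by
    rw [hD, Matrix.det_fromBlocks_zero₂₁]
    simp
  apply coneone_congr σ M D hDdet
  set T' : Matrix (Fin n) (Fin n) R := T - Qᵀ.map σ * Q with hT'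
  have hDσ : Dᵀ.map σ = Matrix.fromBlocks 1 0 (-(Qᵀ.map σ)) 1 := by
    rw [hD, Matrix.fromBlocks_transpose, Matrix.fromBlocks_map, Matrix.fromBlocks_inj]
    refine ⟨?_, ?_, ?_, ?_⟩
    · rw [Matrix.transpose_one]; exact Matrix.map_one σ σ.map_zero σ.map_one
    · rw [Matrix.transpose_zero]; ext i j; simp
    · ext i j; simp [Matrix.map_apply, Matrix.transpose_apply]
    · rw [Matrix.transpose_one]; exact Matrix.map_one σ σ.map_zero σ.map_one
  have key : Dᵀ.map σ * M * D = Matrix.fromBlocks 1 0 0 T' := by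
    rw [hDσ, hMeq, hD, Matrix.fromBlocks_multiply, Matrix.fromBlocks_multiply, hT']
    rw [Matrix.fromBlocks_inj]
    refine ⟨by simp, by simp, by simp, by simp [sub_eq_add_neg]; abel⟩
  have hB : ∀ i j, σ ((Dᵀ.map σ * M * D) j i) = (Dᵀ.map σ * M * D) i j :=
    herm_congr σ hinv M D hM
  have hBdet : IsUnit (Dᵀ.map σ * M * D).det := det_congr_unit σ M D hMdet hDdet
  have hT'herm : ∀ i j, σ (T' j i) = T' i j := by
    intro i j
    have := hB (Sum.inr i) (Sum.inr j)
    rwa [key] at this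
  have hT'det : IsUnit T'.det := by
    rw [key, Matrix.det_fromBlocks_zero₂₁, Matrix.det_one, one_mul] at hBdet
    exact hBdet
  obtain ⟨C', hC'det, hC'⟩ := IH T' hT'herm hT'det
  refine ⟨Matrix.fromBlocks 1 0 0 C', ?_, ?_⟩
  · rw [Matrix.det_fromBlocks_zero₂₁, Matrix.det_one, one_mul]
    exact hC'det
  · have hCσ : (Matrix.fromBlocks (1 : Matrix (Fin 1) (Fin 1) R) 0 0 C')ᵀ.map σ
        = Matrix.fromBlocks 1 0 0 (C'ᵀ.map σ) := by
      rw [Matrix.fromBlocks_transpose, Matrix.fromBlocks_map, Matrix.fromBlocks_inj]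
      refine ⟨?_, ?_, ?_, rfl⟩
      · rw [Matrix.transpose_one]; exact Matrix.map_one σ σ.map_zero σ.map_one
      · rw [Matrix.transpose_zero]; ext i j; simp
      · rw [Matrix.transpose_zero]; ext i j; simp
    rw [hCσ, key, Matrix.fromBlocks_multiply, Matrix.fromBlocks_multiply]
    rw [← Matrix.fromBlocks_one, Matrix.fromBlocks_inj]
    refine ⟨by simp, by simp, by simp, ?_⟩
    simpa [Matrix.mul_assoc] using hC'

end Block

section SqRoot2
open Polynomial IsLocalRing



variable {R : Type*} [CommRing R] [HenselianLocalRing R]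

lemma unit_add_mem_isUnit {u a : R} (hu : IsUnit u) (ha : a ∈ maximalIdeal R) :
    IsUnit (u + a) := by
  by_contra h
  have : u + a ∈ maximalIdeal R := h
  have : u ∈ maximalIdeal R := by simpa using sub_mem this ha
  exact this hu

lemma exists_sqrt_unit (hsep : IsSepClosed (ResidueField R)) (h2 : IsUnit (2 : R))
    (y : Rˣ) : ∃ a : Rˣ, (a : R) * a = y := by
  set k := ResidueField R
  set φ := residue R
  have h2k : (2 : k) ≠ 0 := by
    have : IsUnit (φ 2) := h2.map φ
    rw [map_ofNat] at this
    exact this.ne_zero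
  haveI : NeZero (2 : k) := ⟨h2k⟩
  obtain ⟨b, hb⟩ := IsSepClosed.exists_pow_nat_eq (φ y) 2
  obtain ⟨a₀, ha₀⟩ := IsLocalRing.residue_surjective (R := R) b
  have hb0 : b ≠ 0 := by
    intro h
    have : IsUnit (φ y) := (y.isUnit).map φ
    rw [← hb, h] at this
    simp at this
  have ha₀unit : IsUnit a₀ := by
    by_contra h
    have : a₀ ∈ maximalIdeal R := h
    have : φ a₀ = 0 := (Ideal.Quotient.eq_zero_iff_mem).2 this
    exact hb0 (ha₀ ▸ this)
  have hmon : (X ^ 2 - C (y : R)).Monic := monic_X_pow_sub_C _ two_ne_zero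
  have heval : (X ^ 2 - C (y : R)).eval a₀ ∈ maximalIdeal R := by
    have : φ ((X ^ 2 - C (y : R)).eval a₀) = b ^ 2 - φ y := by
      rw [← ha₀]; simp [φ]
    have h0 : φ ((X ^ 2 - C (y : R)).eval a₀) = 0 := by rw [this, hb, sub_self]
    exact (Ideal.Quotient.eq_zero_iff_mem).1 h0
  have hderiv : IsUnit ((X ^ 2 - C (y : R)).derivative.eval a₀) := by
    have hd : (X ^ 2 - C (y : R)).derivative = C 2 * X := by
      simp
      rw [one_add_one_eq_two, map_ofNat]
    rw [hd]
    simpa using h2.mul ha₀unit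
  obtain ⟨a, ha, hmem⟩ := HenselianLocalRing.is_henselian _ hmon a₀ heval hderiv
  have haunit : IsUnit a := by
    have : a = a₀ + (a - a₀) := by ring
    rw [this]
    exact unit_add_mem_isUnit ha₀unit hmem
  refine ⟨haunit.unit, ?_⟩
  have : a ^ 2 - (y : R) = 0 := by simpa [IsRoot] using ha
  have h' : a * a = (y : R) := by linear_combination this
  simpa using h'

lemma rank_one (hsep : IsSepClosed (ResidueField R)) (σ : R →+* R) (hinv : ∀ r, σ (σ r) = r)
    (h2 : IsUnit (2 : R)) (hres : ∀ r : R, σ r - r ∈ maximalIdeal R)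
    (x : Rˣ) (hx : σ (x : R) = (x : R)) : ∃ c : Rˣ, σ (c : R) * (x : R) * (c : R) = 1 := by
  obtain ⟨c, hc⟩ := exists_sqrt_unit hsep h2 x⁻¹
  have hfix : σ (c : R) = (c : R) := by
    have hxinv : σ ((x⁻¹ : Rˣ) : R) = ((x⁻¹ : Rˣ) : R) := by
      have h1 : σ ((x⁻¹ : Rˣ) : R) * σ (x : R) = 1 := by
        rw [← _root_.map_mul]
        simp
      rw [hx] at h1
      have h2' : ((x⁻¹ : Rˣ) : R) * (x : R) = 1 := by simp
      calc σ ((x⁻¹ : Rˣ) : R) = σ ((x⁻¹ : Rˣ) : R) * ((x : R) * ((x⁻¹ : Rˣ) : R)) := by simp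
        _ = (σ ((x⁻¹ : Rˣ) : R) * (x : R)) * ((x⁻¹ : Rˣ) : R) := by ring
        _ = ((x⁻¹ : Rˣ) : R) := by rw [h1, one_mul]
    have hsq : σ (c : R) * σ (c : R) = (c : R) * (c : R) := by
      rw [← _root_.map_mul, hc, hxinv, ← hc]
    have hkey : (σ (c : R) - c) * (σ (c : R) + c) = 0 := by ring_nf; linear_combination hsq
    have hsum : IsUnit (σ (c : R) + c) := by
      have : σ (c : R) + c = 2 * c + (σ (c : R) - c) := by ring
      rw [this]
      exact unit_add_mem_isUnit (h2.mul c.isUnit) (hres _)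
    have := hsum.unit⁻¹
    have h0 : σ (c : R) - c = 0 := by
      have := congrArg (· * ((hsum.unit⁻¹ : Rˣ) : R)) hkey
      simpa [mul_assoc, IsUnit.mul_val_inv] using this
    linear_combination h0
  refine ⟨c, ?_⟩
  rw [hfix]
  calc (c : R) * x * c = x * (c * c) := by ring
    _ = x * ((x⁻¹ : Rˣ) : R) := by rw [hc]
    _ = 1 := by simp
end SqRoot2

section Main
variable {R : Type*} [CommRing R] [HenselianLocalRing R]

lemma cong_one (hsep : IsSepClosed (ResidueField R)) (σ : R →+* R)
    (hinv : ∀ r, σ (σ r) = r) (h2 : IsUnit (2 : R))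
    (hres : ∀ r : R, σ r - r ∈ maximalIdeal R) :
    ∀ (n : ℕ) (A : Matrix (Fin n) (Fin n) R), (∀ i j, σ (A j i) = A i j) → IsUnit A.det →
      ∃ C : Matrix (Fin n) (Fin n) R, IsUnit C.det ∧ Cᵀ.map σ * A * C = 1 := by
  intro n
  induction n with
  | zero =>
    intro A _ _
    exact ⟨1, by simp, Subsingleton.elim _ _⟩
  | succ n IHn =>
    intro A hA hdet
    obtain ⟨D, hDdet, r, hr⟩ := exists_diag_unit σ hinv h2 hres A hA hdet
    apply coneone_congr σ A D hDdet
    set B₁ : Matrix (Fin (n+1)) (Fin (n+1)) R := Dᵀ.map σ * A * D with hB₁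
    have hB₁herm : ∀ i j, σ (B₁ j i) = B₁ i j := herm_congr σ hinv A D hA
    have hB₁det : IsUnit B₁.det := det_congr_unit σ A D hdet hDdet
    apply coneone_submatrix σ (Equiv.swap (0 : Fin (n+1)) r) B₁
    set B₂ : Matrix (Fin (n+1)) (Fin (n+1)) R :=
      B₁.submatrix (Equiv.swap (0 : Fin (n+1)) r) (Equiv.swap (0 : Fin (n+1)) r) with hB₂
    have hB₂herm : ∀ i j, σ (B₂ j i) = B₂ i j := fun i j => hB₁herm _ _
    have hB₂det : IsUnit B₂.det := by rwa [hB₂, Matrix.det_submatrix_equiv_self]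
    have hB₂00 : IsUnit (B₂ 0 0) := by
      have : B₂ 0 0 = B₁ r r := by
        rw [hB₂]
        simp [Matrix.submatrix_apply, Equiv.swap_apply_left]
      rwa [this]
    -- scale the (0,0) entry to 1
    have hfix : σ (B₂ 0 0) = B₂ 0 0 := hB₂herm 0 0
    obtain ⟨c, hc⟩ := rank_one hsep σ hinv h2 hres hB₂00.unit (by rwa [IsUnit.unit_spec])
    set d : Fin (n+1) → R := fun i => if i = 0 then (c : R) else 1 with hd
    set D₃ : Matrix (Fin (n+1)) (Fin (n+1)) R := Matrix.diagonal d with hD₃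
    have hD₃det : IsUnit D₃.det := by
      rw [hD₃, Matrix.det_diagonal]
      have : ∏ i, d i = (c : R) := by
        rw [hd]
        simp
      rw [this]
      exact c.isUnit
    apply coneone_congr σ B₂ D₃ hD₃det
    set B₃ : Matrix (Fin (n+1)) (Fin (n+1)) R := D₃ᵀ.map σ * B₂ * D₃ with hB₃
    have hB₃herm : ∀ i j, σ (B₃ j i) = B₃ i j := herm_congr σ hinv B₂ D₃ hB₂herm
    have hB₃det : IsUnit B₃.det := det_congr_unit σ B₂ D₃ hB₂det hD₃det
    have hD₃σ : D₃ᵀ.map σ = Matrix.diagonal (fun i => σ (d i)) := by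
      rw [hD₃, Matrix.diagonal_transpose]
      exact Matrix.diagonal_map σ.map_zero
    have hB₃00 : B₃ 0 0 = 1 := by
      have hx : (hB₂00.unit : R) = B₂ 0 0 := hB₂00.unit_spec
      rw [hB₃, hD₃σ, hD₃, Matrix.mul_assoc]
      rw [Matrix.diagonal_mul, Matrix.mul_diagonal]
      simp only [hd, if_pos rfl]
      rw [← hx, ← mul_assoc]
      exact hc
    exact block_step σ hinv B₃ hB₃herm hB₃det hB₃00 IHn

end Main


theorem hermitian_forms_determined_by_rank_over_strictly_henselian_local_ring
    {R : Type*} [CommRing R] [HenselianLocalRing R]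
    (hsep : IsSepClosed (IsLocalRing.ResidueField R))
    (σ : R →+* R) (hinv : ∀ r, σ (σ r) = r)
    (h2 : IsUnit (2 : R))
    (hres : ∀ r : R, σ r - r ∈ IsLocalRing.maximalIdeal R) :
    -- rank-one forms: `σ(c) * x * c = 1`
    (∀ x : Rˣ, σ (x : R) = (x : R) → ∃ c : Rˣ, σ (c : R) * (x : R) * (c : R) = 1) ∧
    -- non-degenerate Hermitian forms are determined by rank
    (∀ (n : ℕ) (A B : Matrix (Fin n) (Fin n) R),
      (∀ i j, σ (A j i) = A i j) → (∀ i j, σ (B j i) = B i j) →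
      IsUnit A.det → IsUnit B.det →
      ∃ C : Matrix (Fin n) (Fin n) R, IsUnit C.det ∧
        (C.transpose.map σ) * A * C = B) := by
  constructor
  · exact fun x hx => rank_one hsep σ hinv h2 hres x hx
  · intro n A B hA hB hAdet hBdet
    obtain ⟨CA, hCAdet, hCA⟩ := cong_one hsep σ hinv h2 hres n A hA hAdet
    obtain ⟨CB, hCBdet, hCB⟩ := cong_one hsep σ hinv h2 hres n B hB hBdet
    set E : Matrix (Fin n) (Fin n) R := CB⁻¹ with hE
    have hmul : CB * E = 1 := Matrix.mul_nonsing_inv _ hCBdet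
    have hEdet : IsUnit E.det := Matrix.isUnit_nonsing_inv_det _ hCBdet
    have h1 : Eᵀ.map σ * CBᵀ.map σ = 1 := by
      rw [← Matrix.map_mul, ← Matrix.transpose_mul, hmul, Matrix.transpose_one]
      exact Matrix.map_one σ σ.map_zero σ.map_one
    have hEB : Eᵀ.map σ * E = B := by
      have : Eᵀ.map σ * (CBᵀ.map σ * B * CB) * E = (Eᵀ.map σ * CBᵀ.map σ) * B * (CB * E) := by
        noncomm_ring
      rw [hCB] at this
      rw [h1, hmul, one_mul, mul_one] at this
      simpa using this
    refine ⟨CA * E, by rw [Matrix.det_mul]; exact hCAdet.mul hEdet, ?_⟩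
    have hsplit : (CA * E)ᵀ.map σ = Eᵀ.map σ * CAᵀ.map σ := by
      rw [Matrix.transpose_mul, Matrix.map_mul]
    rw [hsplit]
    calc Eᵀ.map σ * CAᵀ.map σ * A * (CA * E)
        = Eᵀ.map σ * (CAᵀ.map σ * A * CA) * E := by noncomm_ring
      _ = Eᵀ.map σ * 1 * E := by rw [hCA]
      _ = B := by rw [mul_one]; exact hEB
end

section
/- Let V be a locally free sheaf of finite rank on a scheme X equipped with a non-degenerate symmetric bilinear form φ : V ≅ V*, and let M ⊆ V be a locally free subsheaf that is locally a direct summand such that φ|_M is non-degenerate. For any morphism of schemes g : Y → X, the canonical map g*(M⊥) → (g*M)⊥ is an isomorphism, where M⊥ = ker(V → V* → M*). -/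
open TensorProduct

/-!
Statement 8: Let `V` be a locally free module of finite rank (finitely generated
projective) with a non-degenerate symmetric bilinear form `φ : V ≅ V*`, and let `M ⊆ V` be
a subbundle (a direct summand) such that `φ|_M` is non-degenerate.  For any base change
(`g : Y → X`, here the corresponding morphism of rings `R → S`, the local/affine form of a
morphism of schemes), the canonical map `g*(M⊥) → (g*M)⊥` is an isomorphism, where
`M⊥ = ker (V → V* → M*)`.

Concretely: the base-changed inclusion `S ⊗ M⊥ → S ⊗ V` is injective, and its range is
exactly the orthogonal complement of the image of `S ⊗ M` in `S ⊗ V` with respect to the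
base-changed form.
-/

theorem base_change_commutes_with_orthogonal_complement
    {R S V : Type*} [CommRing R] [CommRing S] [Algebra R S]
    [AddCommGroup V] [Module R V] [Module.Finite R V] [Module.Projective R V]
    (φ : LinearMap.BilinForm R V) (hsymm : ∀ x y : V, φ x y = φ y x)
    -- non-degeneracy of φ: the induced map `V → V*` is bijective
    (hnd : Function.Bijective fun v : V => φ v)
    (M : Submodule R V)
    -- `M` is locally a direct summand
    (hMsplit : ∃ N : Submodule R V, IsCompl M N)
    -- non-degeneracy of `φ|_M`: the induced map `M → M*` is bijective
    (hMnd : Function.Bijective fun m : M => (φ (m : V)).domRestrict M)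
    -- `Mperp` is the orthogonal complement `M⊥ = ker (V → V* → M*)`
    (Mperp : Submodule R V)
    (hMperp : ∀ v : V, v ∈ Mperp ↔ ∀ m ∈ M, φ v m = 0) :
    Function.Injective (LinearMap.baseChange S Mperp.subtype) ∧
    ∀ w : S ⊗[R] V,
      (w ∈ LinearMap.range (LinearMap.baseChange S Mperp.subtype) ↔
        ∀ u ∈ LinearMap.range (LinearMap.baseChange S M.subtype),
          LinearMap.BilinForm.baseChange S φ w u = 0) := by
  classical
  -- `IsCompl M Mperp`
  have hdisj : Disjoint M Mperp := by
    rw [Submodule.disjoint_def]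
    intro v hvM hvP
    have h0 : (fun m : M => (φ (m : V)).domRestrict M) ⟨v, hvM⟩
        = (fun m : M => (φ (m : V)).domRestrict M) 0 := by
      ext m
      simp only [LinearMap.domRestrict_apply, Submodule.coe_zero, map_zero,
        LinearMap.zero_apply]
      exact (hMperp v).1 hvP m m.2
    have := hMnd.injective h0
    exact congrArg Subtype.val this
  have hcodis : Codisjoint M Mperp := by
    rw [codisjoint_iff_le_sup]
    intro v _
    obtain ⟨m, hm⟩ := hMnd.surjective ((φ v).domRestrict M)
    refine Submodule.mem_sup.2 ⟨m, m.2, v - m, ?_, by abel⟩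
    rw [hMperp]
    intro m' hm'
    have h1 : φ (m : V) m' = φ v m' := DFunLike.congr_fun hm ⟨m', hm'⟩
    simp [map_sub, h1]
  have hcompl : IsCompl M Mperp := ⟨hdisj, hcodis⟩
  set projM := Submodule.projectionOnto M Mperp hcompl with hprojM
  set projP := Submodule.projectionOnto Mperp M hcompl.symm with hprojP
  set φS := LinearMap.BilinForm.baseChange S φ with hφS
  -- symmetry of the base-changed form
  have hsymmS : ∀ a b : S ⊗[R] V, φS a b = φS b a := fun a b =>
    ((LinearMap.BilinForm.IsSymm.baseChange S (B₂ := φ) ⟨fun x y => hsymm x y⟩).eq b a).symm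
  -- injectivity
  have hinj : Function.Injective (LinearMap.baseChange S Mperp.subtype) := by
    have h : (projP.baseChange S) ∘ₗ (Mperp.subtype.baseChange S) = LinearMap.id := by
      rw [← LinearMap.baseChange_comp, Submodule.projectionOnto_comp_subtype,
        LinearMap.baseChange_id]
    exact LinearMap.injective_of_comp_eq_id _ _ h
  -- pairing of Mperp with M vanishes after base change
  have key1 : ∀ (z : S ⊗[R] Mperp) (z' : S ⊗[R] M),
      φS (Mperp.subtype.baseChange S z) (M.subtype.baseChange S z') = 0 := by
    intro z z'
    induction z using TensorProduct.induction_on with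
    | zero => simp
    | tmul s p =>
      induction z' using TensorProduct.induction_on with
      | zero => simp
      | tmul t m =>
        simp only [LinearMap.baseChange_tmul, Submodule.coe_subtype, hφS,
          LinearMap.BilinForm.baseChange_tmul]
        rw [(hMperp (p : V)).1 p.2 m m.2]
        simp
      | add a b ha hb =>
        simp only [LinearMap.baseChange_tmul, Submodule.coe_subtype] at ha hb
        simp [map_add, ha, hb]
    | add a b ha hb => simp [map_add, ha, hb]
  -- dual basis for M
  obtain ⟨n, f, g, -, -, hfg⟩ := Module.Finite.exists_comp_eq_id_of_projective R V
  set x : Fin n → M := fun j => projM (f (fun k => if j = k then (1:R) else 0)) with hx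
  have hy : ∀ j : Fin n, ∃ yj : M,
      (φ (yj : V)).domRestrict M = (LinearMap.proj j) ∘ₗ (g ∘ₗ M.subtype) :=
    fun j => hMnd.surjective _
  choose y hy using hy
  have hyφ : ∀ (j : Fin n) (m : M), φ (m : V) ((y j : M) : V) = g (m : V) j := by
    intro j m
    rw [hsymm]
    exact DFunLike.congr_fun (hy j) m
  have hbasis : ∀ m : M, m = ∑ j, φ (m : V) ((y j : M) : V) • x j := by
    intro m
    have h1 : (m : V) = ∑ j, (g (m : V) j) • f (fun k => if j = k then (1:R) else 0) := by
      have hfg' : f (g (m : V)) = (m : V) := by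
        have := DFunLike.congr_fun hfg (m : V); simpa using this
      conv_lhs => rw [← hfg']
      rw [pi_eq_sum_univ (g (m : V)), map_sum]
      simp
    have h2 := congrArg projM h1
    rw [map_sum] at h2
    simp only [map_smul] at h2
    rw [Submodule.projectionOnto_apply_left hcompl m] at h2
    calc m = ∑ j, g (m : V) j • x j := h2
      _ = ∑ j, φ (m : V) ((y j : M) : V) • x j :=
          Finset.sum_congr rfl fun j _ => by rw [hyφ]
  -- key identity over S
  have key2 : ∀ z : S ⊗[R] M, M.subtype.baseChange S z =
      ∑ j, φS (M.subtype.baseChange S z) ((1:S) ⊗ₜ ((y j : M) : V)) •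
        ((1:S) ⊗ₜ[R] ((x j : M) : V)) := by
    intro z
    induction z using TensorProduct.induction_on with
    | zero => simp
    | tmul s m =>
      simp only [LinearMap.baseChange_tmul, Submodule.coe_subtype, hφS,
        LinearMap.BilinForm.baseChange_tmul]
      have hterm : ∀ j : Fin n,
          (φ (m : V) ((y j : M) : V) • (s * 1)) • ((1:S) ⊗ₜ[R] ((x j : M) : V))
          = s ⊗ₜ[R] (φ (m : V) ((y j : M) : V) • ((x j : M) : V)) :=
        fun j =>
        calc (φ (m : V) ((y j : M) : V) • (s * 1)) • ((1:S) ⊗ₜ[R] ((x j : M) : V))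
            = φ (m : V) ((y j : M) : V) • (s • ((1:S) ⊗ₜ[R] ((x j : M) : V))) := by
              rw [mul_one, smul_assoc]
          _ = φ (m : V) ((y j : M) : V) • (s ⊗ₜ[R] ((x j : M) : V)) := by
              rw [smul_tmul', smul_eq_mul, mul_one]
          _ = s ⊗ₜ[R] (φ (m : V) ((y j : M) : V) • ((x j : M) : V)) :=
              (TensorProduct.tmul_smul _ _ _).symm
      have hsum : (∑ j, (φ (m : V) ((y j : M) : V) • (s * 1)) • ((1:S) ⊗ₜ[R] ((x j : M) : V)))
          = s ⊗ₜ[R] (∑ j, φ (m : V) ((y j : M) : V) • ((x j : M) : V)) := by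
        rw [Finset.sum_congr rfl fun j _ => hterm j, ← TensorProduct.tmul_sum]
      rw [hsum]
      congr 1
      calc (m : V) = ((∑ j, φ (m : V) ((y j : M) : V) • x j : M) : V) :=
            congrArg Subtype.val (hbasis m)
        _ = ∑ j, φ (m : V) ((y j : M) : V) • ((x j : M) : V) := by push_cast; rfl
    | add a b ha hb =>
      rw [map_add]
      have hadd : ∀ u : S ⊗[R] V,
          φS (M.subtype.baseChange S a + M.subtype.baseChange S b) u
          = φS (M.subtype.baseChange S a) u + φS (M.subtype.baseChange S b) u := by
        intro u; rw [map_add, LinearMap.add_apply]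
      simp only [hadd, add_smul, Finset.sum_add_distrib]
      rw [← ha, ← hb]
  refine ⟨hinj, fun w => ⟨?_, ?_⟩⟩
  · rintro ⟨z, rfl⟩ u ⟨z', rfl⟩
    exact key1 z z'
  · intro hw
    -- decompose w
    have hdecomp : w = M.subtype.baseChange S ((projM.baseChange S) w)
        + Mperp.subtype.baseChange S ((projP.baseChange S) w) := by
      have hid : (M.subtype ∘ₗ projM) + (Mperp.subtype ∘ₗ projP) = LinearMap.id := by
        ext v
        exact Submodule.projection_add_projection_eq_self hcompl v
      have h2 : M.subtype.baseChange S ∘ₗ projM.baseChange S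
          + Mperp.subtype.baseChange S ∘ₗ projP.baseChange S = LinearMap.id := by
        rw [← LinearMap.baseChange_comp, ← LinearMap.baseChange_comp,
          ← LinearMap.baseChange_add, hid, LinearMap.baseChange_id]
      have h3 := DFunLike.congr_fun h2 w
      simpa using h3.symm
    set zM := (projM.baseChange S) w with hzM
    set zP := (projP.baseChange S) w with hzP
    have hMzero : M.subtype.baseChange S zM = 0 := by
      have horth : ∀ z' : S ⊗[R] M,
          φS (M.subtype.baseChange S zM) (M.subtype.baseChange S z') = 0 := by
        intro z'
        have h1 : φS w (M.subtype.baseChange S z') = 0 :=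
          hw _ ⟨z', rfl⟩
        rw [hdecomp] at h1
        rw [map_add, LinearMap.add_apply, key1] at h1
        simpa using h1
      rw [key2 zM]
      refine Finset.sum_eq_zero fun j _ => ?_
      have : φS (M.subtype.baseChange S zM) ((1:S) ⊗ₜ ((y j : M) : V)) = 0 := by
        have := horth ((1:S) ⊗ₜ (y j))
        simpa using this
      rw [this, zero_smul]
    exact ⟨zP, by rw [hdecomp, hMzero, zero_add]⟩
end
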